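/- Let a_0, b_0 ≥ 0 and, for each j in a finite index set S, let a_j ∈ ℝ and b_j ≥ 0. Suppose the function f(θ) = ∏_{j∈S} (θ·a_j + b_j)/(θ·a_0 + b_0) is strictly positive for all θ ∈ [0,1]. Then θ ↦ log(f(θ)) is quasiconcave on [0,1]; i.e., for all θ1, θ2 ∈ [0,1] and t ∈ [0,1], log f(t·θ1 + (1−t)·θ2) ≥ min(log f(θ1), log f(θ2)). -/

import Mathlib

/-- quasiconcavity of the log of the ratio-product function on [0,1]. -/
theorem stmt_0 {ι : Type*} (S : Finset ι) (a b : ι → ℝ) (a0 b0 : ℝ)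
    (ha0 : 0 ≤ a0) (hb0 : 0 ≤ b0) (hb : ∀ j ∈ S, 0 ≤ b j)
    (f : ℝ → ℝ)
    (hf : ∀ θ : ℝ, f θ = ∏ j ∈ S, (θ * a j + b j) / (θ * a0 + b0))
    (hpos : ∀ θ ∈ Set.Icc (0:ℝ) 1, 0 < f θ) :
    ∀ θ1 ∈ Set.Icc (0:ℝ) 1, ∀ θ2 ∈ Set.Icc (0:ℝ) 1, ∀ t ∈ Set.Icc (0:ℝ) 1,
      Real.log (f (t * θ1 + (1 - t) * θ2)) ≥
        min (Real.log (f θ1)) (Real.log (f θ2)) := by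
  intro θ1 h1 θ2 h2 t ht
  by_cases hS : S = ∅
  · simp [hf, hS]
  have hSne : S.Nonempty := Finset.nonempty_iff_ne_empty.2 hS
  obtain ⟨j0, hj0⟩ := hSne
  -- numerator positivity
  have hnum : ∀ j ∈ S, ∀ θ ∈ Set.Icc (0:ℝ) 1, 0 < θ * a j + b j := by
    intro j hj θ hθ
    by_contra hcon
    push_neg at hcon
    have hroot : ∃ θ' ∈ Set.Icc (0:ℝ) 1, θ' * a j + b j = 0 := by
      rcases eq_or_lt_of_le hcon with h0 | h0
      · exact ⟨θ, hθ, h0⟩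
      · have haj : a j < 0 := by nlinarith [hb j hj, hθ.1, hθ.2]
        refine ⟨-(b j)/(a j), ⟨?_, ?_⟩, ?_⟩
        · rw [div_nonneg_iff]
          exact Or.inr ⟨by linarith [hb j hj], haj.le⟩
        · rw [div_le_iff_of_neg haj]
          nlinarith [hθ.2, hb j hj]
        · rw [div_mul_cancel₀ _ haj.ne]
          ring
    obtain ⟨θ', hθ', hr⟩ := hroot
    have hp := hpos θ' hθ'
    rw [hf θ'] at hp
    have hz : (∏ j ∈ S, (θ' * a j + b j) / (θ' * a0 + b0)) = 0 :=
      Finset.prod_eq_zero hj (by rw [hr, zero_div])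
    linarith
  -- denominator positivity
  have hden : ∀ θ ∈ Set.Icc (0:ℝ) 1, 0 < θ * a0 + b0 := by
    intro θ hθ
    rcases eq_or_lt_of_le (by nlinarith [hθ.1] : (0:ℝ) ≤ θ * a0 + b0) with h0 | h0
    · exfalso
      have hp := hpos θ hθ
      rw [hf θ] at hp
      have hz : (∏ j ∈ S, (θ * a j + b j) / (θ * a0 + b0)) = 0 :=
        Finset.prod_eq_zero hj0 (by rw [← h0, div_zero])
      linarith
    · exact h0
  set θ3 := t * θ1 + (1 - t) * θ2 with hθ3
  have h3 : θ3 ∈ Set.Icc (0:ℝ) 1 := by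
    constructor
    · nlinarith [ht.1, ht.2, h1.1, h2.1]
    · nlinarith [ht.1, ht.2, h1.2, h2.2, h1.1, h2.1]
  have hD1p : 0 < θ1 * a0 + b0 := hden θ1 h1
  have hD2p : 0 < θ2 * a0 + b0 := hden θ2 h2
  have hD3p : 0 < θ3 * a0 + b0 := hden θ3 h3
  set s := t * (θ1 * a0 + b0) / (θ3 * a0 + b0) with hs
  have hs0 : 0 ≤ s := div_nonneg (mul_nonneg ht.1 hD1p.le) hD3p.le
  have hsum : s + (1 - t) * (θ2 * a0 + b0) / (θ3 * a0 + b0) = 1 := by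
    rw [hs, ← add_div, div_eq_one_iff_eq hD3p.ne']
    rw [hθ3]; ring
  have hs1 : s ≤ 1 := by
    have h2' : 0 ≤ (1 - t) * (θ2 * a0 + b0) / (θ3 * a0 + b0) :=
      div_nonneg (mul_nonneg (by linarith [ht.2]) hD2p.le) hD3p.le
    linarith
  have hlog : ∀ θ ∈ Set.Icc (0:ℝ) 1, Real.log (f θ) =
      ∑ j ∈ S, Real.log ((θ * a j + b j) / (θ * a0 + b0)) := by
    intro θ hθ
    rw [hf θ, Real.log_prod]
    intro j hj
    exact ne_of_gt (div_pos (hnum j hj θ hθ) (hden θ hθ))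
  have key : ∀ j ∈ S,
      s * Real.log ((θ1 * a j + b j) / (θ1 * a0 + b0)) +
        (1 - s) * Real.log ((θ2 * a j + b j) / (θ2 * a0 + b0)) ≤
      Real.log ((θ3 * a j + b j) / (θ3 * a0 + b0)) := by
    intro j hj
    have h1s : 1 - s = (1 - t) * (θ2 * a0 + b0) / (θ3 * a0 + b0) := by linarith
    have hcomb : (θ3 * a j + b j) / (θ3 * a0 + b0) =
        s * ((θ1 * a j + b j) / (θ1 * a0 + b0)) +
        (1 - s) * ((θ2 * a j + b j) / (θ2 * a0 + b0)) := by
      rw [hs, h1s, hθ3]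
      field_simp
      ring
    have hp1 : (θ1 * a j + b j) / (θ1 * a0 + b0) ∈ Set.Ioi (0:ℝ) :=
      div_pos (hnum j hj θ1 h1) hD1p
    have hp2 : (θ2 * a j + b j) / (θ2 * a0 + b0) ∈ Set.Ioi (0:ℝ) :=
      div_pos (hnum j hj θ2 h2) hD2p
    have hc : s • Real.log ((θ1 * a j + b j) / (θ1 * a0 + b0)) +
        (1 - s) • Real.log ((θ2 * a j + b j) / (θ2 * a0 + b0)) ≤
        Real.log (s • ((θ1 * a j + b j) / (θ1 * a0 + b0)) +
          (1 - s) • ((θ2 * a j + b j) / (θ2 * a0 + b0))) :=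
      (strictConcaveOn_log_Ioi.concaveOn).2 hp1 hp2 hs0 (by linarith) (by ring)
    rw [smul_eq_mul, smul_eq_mul, smul_eq_mul, smul_eq_mul] at hc
    rw [hcomb]
    exact hc
  rw [ge_iff_le, hlog θ3 h3, hlog θ1 h1, hlog θ2 h2]
  have hsum3 : s * (∑ j ∈ S, Real.log ((θ1 * a j + b j) / (θ1 * a0 + b0))) +
      (1 - s) * (∑ j ∈ S, Real.log ((θ2 * a j + b j) / (θ2 * a0 + b0))) ≤
      ∑ j ∈ S, Real.log ((θ3 * a j + b j) / (θ3 * a0 + b0)) := by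
    rw [Finset.mul_sum, Finset.mul_sum, ← Finset.sum_add_distrib]
    exact Finset.sum_le_sum key
  set L1 := ∑ j ∈ S, Real.log ((θ1 * a j + b j) / (θ1 * a0 + b0))
  set L2 := ∑ j ∈ S, Real.log ((θ2 * a j + b j) / (θ2 * a0 + b0))
  calc min L1 L2 = s * min L1 L2 + (1 - s) * min L1 L2 := by ring
    _ ≤ s * L1 + (1 - s) * L2 :=
        add_le_add (mul_le_mul_of_nonneg_left (min_le_left _ _) hs0)
          (mul_le_mul_of_nonneg_left (min_le_right _ _) (by linarith))
    _ ≤ _ := hsum3
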